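/- Let c be a real number with |c| > 27/4 and β = S(c). If c < -27/4, then β is the unique real root of x³ - cx + c. If c > 27/4, then 1 < β < 3/2 and β is the unique root of x³ - cx + c in the interval (1, 3/2). -/

import Mathlib

open Finset Nat

noncomputable def Rn (p n : ℕ) : ℝ := (p : ℝ) / (p + 3 * n) * ((p + 3 * n).choose n)

lemma Rn_zero (n : ℕ) : Rn 0 n = 0 := by simp [Rn]

lemma Rn_p_zero (p : ℕ) : Rn (p+1) 0 = 1 := by
  simp [Rn]
  field_simp
  exact Nat.cast_add_one_ne_zero p

lemma Rn_nonneg (p n : ℕ) : 0 ≤ Rn p n := by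
  unfold Rn
  positivity

lemma Rn_rec (p n : ℕ) : Rn (p+1) (n+1) = Rn p (n+1) + Rn (p+3) n := by
  unfold Rn
  have h1 : (p+1) + 3*(n+1) = (p + 3*(n+1)) + 1 := by ring
  rw [h1]
  have h2 : (p + 3*(n+1)) + 1 = (p+3+3*n) + 1 := by ring
  have h3 : p + 3*(n+1) = (p+3+3*n) := by ring
  rw [h2, h3]
  set m := p + 3 + 3*n with hm
  have hpas : (m+1).choose (n+1) = m.choose n + m.choose (n+1) := Nat.choose_succ_succ m n
  have hratio : m.choose (n+1) * (n+1) = m.choose n * (m - n) := Nat.choose_succ_right_eq m n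
  have hmn : m - n = p + 3 + 2*n := by omega
  rw [hmn] at hratio
  have hratioR : (m.choose (n+1) : ℝ) * (n+1) = (m.choose n : ℝ) * (p + 3 + 2*n) := by
    exact_mod_cast congrArg (Nat.cast : ℕ → ℝ) hratio
  have hpasR : ((m+1).choose (n+1) : ℝ) = m.choose n + m.choose (n+1) := by exact_mod_cast hpas
  push_cast
  rw [hpasR]
  have hmR : (m : ℝ) = p + 3 + 3*n := by push_cast [hm]; ring
  have hm0 : (m:ℝ) > 0 := by rw [hmR]; positivity
  have hn0 : ((n:ℝ)+1) > 0 := by positivity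
  field_simp
  linear_combination (3*((p:ℝ)+3+3*n)) * hratioR

lemma Rn_conv : ∀ n p : ℕ, ∑ k ∈ range (n+1), Rn 1 k * Rn (p+1) (n-k) = Rn (p+2) n := by
  intro n
  induction n with
  | zero => intro p; simp [Rn_p_zero]
  | succ n ih =>
    intro p
    induction p with
    | zero =>
      rw [Finset.sum_range_succ]
      have e1 : ∀ k ∈ range (n+1), Rn 1 k * Rn 1 (n+1-k) = Rn 1 k * Rn 3 (n-k) := by
        intro k hk
        have hk' : k ≤ n := by simpa [Nat.lt_succ_iff] using hk
        have : n + 1 - k = (n - k) + 1 := by omega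
        rw [this]
        have := Rn_rec 0 (n-k)
        rw [Rn_zero] at this
        rw [this]; ring
      rw [Finset.sum_congr rfl e1, ih 2]
      simp only [Nat.sub_self, Rn_p_zero, mul_one]
      have := Rn_rec 1 n
      linarith [this]
    | succ p ihp =>
      rw [Finset.sum_range_succ]
      have e1 : ∀ k ∈ range (n+1), Rn 1 k * Rn (p+2) (n+1-k)
          = Rn 1 k * Rn (p+1) (n+1-k) + Rn 1 k * Rn (p+4) (n-k) := by
        intro k hk
        have hk' : k ≤ n := by simpa [Nat.lt_succ_iff] using hk
        have h2 : n + 1 - k = (n - k) + 1 := by omega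
        rw [h2, Rn_rec (p+1) (n-k)]
        ring
      rw [Finset.sum_congr rfl e1, Finset.sum_add_distrib, ih (p+3)]
      have hsplit : ∑ k ∈ range (n+1), Rn 1 k * Rn (p+1) (n+1-k)
          = (∑ k ∈ range (n+2), Rn 1 k * Rn (p+1) (n+1-k)) - Rn 1 (n+1) * Rn (p+1) 0 := by
        rw [Finset.sum_range_succ (f := fun k => Rn 1 k * Rn (p+1) (n+1-k)) (n := n+1)]; simp
      rw [hsplit, ihp]
      simp only [Nat.sub_self, Rn_p_zero, mul_one]
      have := Rn_rec (p+2) n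
      linarith [this]

lemma Rn_one (n : ℕ) : Rn 1 n = (1/(2*(n:ℝ)+1)) * ((3*n).choose n : ℝ) := by
  unfold Rn
  have h1 : (3*n+1) * (3*n).choose n = (3*n+1).choose (n+1) * (n+1) := by
    simpa using (Nat.add_one_mul_choose_eq (3*n) n)
  have h2 : (3*n+1).choose (n+1) * (n+1) = (3*n+1).choose n * (3*n+1 - n) := Nat.choose_succ_right_eq _ _
  have h3 : 3*n+1-n = 2*n+1 := by omega
  rw [h3] at h2
  have key : (3*n+1) * (3*n).choose n = (3*n+1).choose n * (2*n+1) := by omega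
  have keyR : ((3*n:ℝ)+1) * ((3*n).choose n : ℝ) = ((3*n+1).choose n : ℝ) * (2*(n:ℝ)+1) := by
    exact_mod_cast congrArg (Nat.cast : ℕ → ℝ) key
  have e : (1:ℕ) + 3*n = 3*n+1 := by omega
  rw [e]
  push_cast
  have hp : (3*(n:ℝ)+1) > 0 := by positivity
  have hq : (2*(n:ℝ)+1) > 0 := by positivity
  field_simp
  linarith [keyR]

lemma choose3_le_pow (n : ℕ) : ((3*n).choose n : ℝ) ≤ (27/4)^n := by
  induction n with
  | zero => simp
  | succ n ih =>
    have hle : n + 1 ≤ 3*n + 3 := by omega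
    have hfac : ((3*(n+1)).choose (n+1) : ℝ) * ((n+1) * ((2*n+1)*(2*n+2)))
        = ((3*n).choose n : ℝ) * ((3*n+1)*((3*n+2)*(3*n+3))) := by
      have h1 : ((3*(n+1)).choose (n+1) : ℝ) = (3*n+3)! / ((n+1)! * (2*n+2)!) := by
        have : 3*(n+1) = 3*n+3 := by ring
        rw [this, Nat.cast_choose ℝ (by omega : n+1 ≤ 3*n+3),
          show (3*n+3) - (n+1) = 2*n+2 from by omega]
      have h2 : ((3*n).choose n : ℝ) = (3*n)! / ((n)! * (2*n)!) := by
        rw [Nat.cast_choose ℝ (by omega : n ≤ 3*n), show 3*n - n = 2*n from by omega]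
      rw [h1, h2]
      have e1 : (3*n+3)! = (3*n+3) * ((3*n+2) * ((3*n+1) * (3*n)!)) := by
        rw [show 3*n+3 = (3*n+2)+1 by ring, Nat.factorial_succ]
        rw [show 3*n+2 = (3*n+1)+1 by ring, Nat.factorial_succ]
        rw [show 3*n+1 = (3*n)+1 by ring, Nat.factorial_succ]
      have e2 : (2*n+2)! = (2*n+2) * ((2*n+1) * (2*n)!) := by
        rw [show 2*n+2 = (2*n+1)+1 by ring, Nat.factorial_succ]
        rw [show 2*n+1 = (2*n)+1 by ring, Nat.factorial_succ]
      have e3 : (n+1)! = (n+1) * n ! := Nat.factorial_succ n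
      rw [e1, e2, e3]
      push_cast
      have f1 : ((3*n)! : ℝ) > 0 := by positivity
      have f2 : ((2*n)! : ℝ) > 0 := by positivity
      have f3 : ((n)! : ℝ) > 0 := by positivity
      field_simp
    have hpos : (0:ℝ) < (n+1) * ((2*n+1)*(2*n+2)) := by positivity
    have hstep : ((3*(n+1)).choose (n+1) : ℝ) ≤ (27/4) * ((3*n).choose n : ℝ) := by
      have c0 : (0:ℝ) ≤ ((3*n).choose n : ℝ) := by positivity
      have n0 : (0:ℝ) ≤ (n:ℝ) := by positivity
      nlinarith [hfac, hpos, c0, n0, mul_nonneg c0 n0, mul_nonneg (mul_nonneg c0 n0) n0]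
    calc ((3*(n+1)).choose (n+1) : ℝ) ≤ (27/4) * ((3*n).choose n : ℝ) := hstep
      _ ≤ (27/4) * (27/4)^n := by nlinarith [ih]
      _ = (27/4)^(n+1) := by ring

lemma Rn_one_le (n : ℕ) : Rn 1 n ≤ (27/4)^n := by
  rw [Rn_one]
  have h1 : (1/(2*(n:ℝ)+1)) ≤ 1 := by
    rw [div_le_one (by positivity)]; linarith [Nat.cast_nonneg (α := ℝ) n]
  calc (1/(2*(n:ℝ)+1)) * ((3*n).choose n : ℝ) ≤ 1 * ((3*n).choose n : ℝ) := by
        apply mul_le_mul_of_nonneg_right h1 (by positivity)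
    _ = ((3*n).choose n : ℝ) := by ring
    _ ≤ (27/4)^n := choose3_le_pow n

lemma Rn_two_le (n : ℕ) : Rn 2 n ≤ (27/4)^(n+1) := by
  unfold Rn
  have h1 : ((2:ℝ))/(2 + 3*n) ≤ 1 := by
    rw [div_le_one (by positivity)]; linarith [Nat.cast_nonneg (α := ℝ) n]
  have h2 : ((2 + 3*n).choose n : ℝ) ≤ ((3*(n+1)).choose (n+1) : ℝ) := by
    have : (3*(n+1)).choose (n+1) = (3*n+2).choose n + (3*n+2).choose (n+1) := by
      rw [show 3*(n+1) = (3*n+2)+1 by ring]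
      exact Nat.choose_succ_succ _ _
    have hn : (2+3*n) = 3*n+2 := by omega
    rw [hn]
    exact_mod_cast le_trans (Nat.le_add_right _ _) this.ge
  calc ((2:ℝ))/(2+3*n) * ((2+3*n).choose n : ℝ) ≤ 1 * ((3*(n+1)).choose (n+1) : ℝ) := by
        apply mul_le_mul h1 h2 (by positivity) (by norm_num)
    _ ≤ (27/4)^(n+1) := by simpa using choose3_le_pow (n+1)

lemma summ_aux (x : ℝ) (hx : |x| < 4/27) (K : ℝ) (hK : 0 ≤ K) (f : ℕ → ℝ)
    (hf0 : ∀ n, 0 ≤ f n) (hf : ∀ n, f n ≤ K * (27/4)^n) :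
    Summable (fun n => ‖f n * x^n‖) := by
  have hg : Summable (fun n : ℕ => K * (27/4*|x|)^n) := by
    apply Summable.mul_left
    apply summable_geometric_of_lt_one (by positivity)
    calc 27/4*|x| < 27/4 * (4/27) := by nlinarith
      _ = 1 := by norm_num
  refine Summable.of_nonneg_of_le (fun n => norm_nonneg _) (fun n => ?_) hg
  have heq : ‖f n * x^n‖ = f n * |x|^n := by
    rw [norm_mul, Real.norm_eq_abs, Real.norm_eq_abs, abs_of_nonneg (hf0 n), abs_pow]
  rw [heq]
  calc f n * |x|^n ≤ (K * (27/4)^n) * |x|^n := by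
        apply mul_le_mul_of_nonneg_right (hf n) (by positivity)
    _ = K * (27/4*|x|)^n := by rw [mul_pow]; ring

lemma funeq (x : ℝ) (hx : |x| < 4/27) :
    (∑' n, Rn 1 n * x^n) = 1 + x * (∑' n, Rn 1 n * x^n)^3 := by
  have h1 : Summable (fun n => ‖Rn 1 n * x^n‖) :=
    summ_aux x hx 1 zero_le_one _ (Rn_nonneg 1) (fun n => by simpa using Rn_one_le n)
  have h2 : Summable (fun n => ‖Rn 2 n * x^n‖) :=
    summ_aux x hx (27/4) (by norm_num) _ (Rn_nonneg 2)
      (fun n => by have := Rn_two_le n; calc Rn 2 n ≤ (27/4)^(n+1) := this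
                   _ = 27/4 * (27/4)^n := by ring)
  set T := ∑' n, Rn 1 n * x^n with hT
  have sq : T * T = ∑' n, Rn 2 n * x^n := by
    rw [hT, tsum_mul_tsum_eq_tsum_sum_antidiagonal_of_summable_norm h1 h1]
    congr 1; funext n
    rw [Finset.Nat.sum_antidiagonal_eq_sum_range_succ
      (f := fun i j => (Rn 1 i * x^i) * (Rn 1 j * x^j))]
    have : ∀ k ∈ range (n+1), (Rn 1 k * x^k) * (Rn 1 (n-k) * x^(n-k))
        = (Rn 1 k * Rn 1 (n-k)) * x^n := by
      intro k hk
      have hk' : k ≤ n := by simpa [Nat.lt_succ_iff] using hk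
      rw [show n = k + (n-k) from by omega, pow_add]
      ring_nf
      rw [show k + (n-k) - k = n - k from by omega]
    rw [Finset.sum_congr rfl this, ← Finset.sum_mul, Rn_conv n 0]
  have cube : T * (T * T) = ∑' n, Rn 3 n * x^n := by
    rw [sq, hT, tsum_mul_tsum_eq_tsum_sum_antidiagonal_of_summable_norm h1 h2]
    congr 1; funext n
    rw [Finset.Nat.sum_antidiagonal_eq_sum_range_succ
      (f := fun i j => (Rn 1 i * x^i) * (Rn 2 j * x^j))]
    have : ∀ k ∈ range (n+1), (Rn 1 k * x^k) * (Rn 2 (n-k) * x^(n-k))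
        = (Rn 1 k * Rn 2 (n-k)) * x^n := by
      intro k hk
      have hk' : k ≤ n := by simpa [Nat.lt_succ_iff] using hk
      rw [show n = k + (n-k) from by omega, pow_add]
      ring_nf
      rw [show k + (n-k) - k = n - k from by omega]
    rw [Finset.sum_congr rfl this, ← Finset.sum_mul, Rn_conv n 1]
  have shift : T = 1 + x * (T * (T * T)) := by
    rw [cube]
    have hs : Summable (fun n => Rn 1 n * x^n) := h1.of_norm
    rw [hT, hs.tsum_eq_zero_add]
    have e0 : Rn 1 0 * x^0 = 1 := by rw [Rn_p_zero 0]; simp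
    rw [e0]
    congr 1
    rw [← tsum_mul_left]
    congr 1; funext n
    have : Rn 1 (n+1) = Rn 3 n := by
      have := Rn_rec 0 n; rw [Rn_zero] at this; linarith
    rw [this, pow_succ]
    ring
  calc T = 1 + x * (T * (T * T)) := shift
    _ = 1 + x * T^3 := by ring


lemma beta_lt (c : ℝ) (hc : c > 27/4) : (∑' n, Rn 1 n * (c⁻¹)^n) < 3/2 := by
  have hcpos : 0 < c := by linarith
  have ha0 : 0 < c⁻¹ := inv_pos.mpr hcpos
  have haa : c⁻¹ < 4/27 := by
    rw [show (4:ℝ)/27 = (27/4)⁻¹ by norm_num]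
    exact inv_strictAnti₀ (by norm_num) hc
  set a := c⁻¹ with ha
  set cl : ℝ → ℝ := fun y => max 0 (min y a) with hcl
  have hclcont : Continuous cl := Continuous.max continuous_const (Continuous.min continuous_id continuous_const)
  have hcl0 : ∀ y, 0 ≤ cl y := fun y => le_max_left _ _
  have hcla : ∀ y, cl y ≤ a := fun y => max_le ha0.le (min_le_right _ _)
  have hclabs : ∀ y, |cl y| < 4/27 := by
    intro y; rw [abs_of_nonneg (hcl0 y)]; exact lt_of_le_of_lt (hcla y) haa
  set g : ℝ → ℝ := fun y => ∑' n, Rn 1 n * (cl y)^n with hg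
  have hgcont : Continuous g := by
    apply continuous_tsum (u := fun n : ℕ => (27/4*a)^n)
    · intro n
      exact continuous_const.mul (hclcont.pow n)
    · apply summable_geometric_of_lt_one (by positivity)
      calc 27/4*a < 27/4*(4/27) := by nlinarith
        _ = 1 := by norm_num
    · intro n y
      have h0 : ‖Rn 1 n * (cl y)^n‖ = Rn 1 n * (cl y)^n := by
        rw [Real.norm_eq_abs, abs_of_nonneg (mul_nonneg (Rn_nonneg 1 n) (pow_nonneg (hcl0 y) n))]
      rw [h0, mul_pow]
      apply mul_le_mul (Rn_one_le n) (pow_le_pow_left₀ (hcl0 y) (hcla y) n) (by positivity) (by positivity)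
  have hfun : ∀ y, g y = 1 + cl y * (g y)^3 := fun y => funeq (cl y) (hclabs y)
  have hg0 : g 0 = 1 := by
    have hcl00 : cl 0 = 0 := by
      rw [hcl]; simp [min_eq_left ha0.le]
    rw [hg]; simp only [hcl00]
    rw [tsum_eq_single 0 (fun n hn => by simp [zero_pow hn])]
    simp [Rn_p_zero 0]
  have hga : g a = ∑' n, Rn 1 n * a^n := by
    have hclaa : cl a = a := by rw [hcl]; simp [ha0.le]
    show (∑' n, Rn 1 n * (cl a)^n) = _
    rw [hclaa]
  by_contra h
  push_neg at h
  rw [← hga] at h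
  have hmem : (3/2 : ℝ) ∈ Set.Icc (g 0) (g a) := by
    constructor
    · rw [hg0]; norm_num
    · exact h
  obtain ⟨y, _, hgy⟩ := intermediate_value_Icc ha0.le hgcont.continuousOn hmem
  have := hfun y
  rw [hgy] at this
  have hcly : cl y = 4/27 := by nlinarith [this]
  have := hclabs y
  rw [abs_of_nonneg (hcl0 y)] at this
  linarith

/-- For `c < -27/4`, `β = S(c)` is the unique real root of `x³ - cx + c`;
for `c > 27/4`, `1 < β < 3/2` and `β` is the unique root in `(1, 3/2)`. -/
theorem hypergeometric_series_which_root (c : ℝ) (hc : |c| > 27 / 4) :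
    let β : ℝ :=
      ∑' n : ℕ, (1 / (2 * (n : ℝ) + 1)) * (Nat.choose (3 * n) n : ℝ) * c⁻¹ ^ n
    (c < -27 / 4 → β ^ 3 - c * β + c = 0 ∧
      ∀ x : ℝ, x ^ 3 - c * x + c = 0 → x = β) ∧
    (c > 27 / 4 → 1 < β ∧ β < 3 / 2 ∧ β ^ 3 - c * β + c = 0 ∧
      ∀ x : ℝ, x ^ 3 - c * x + c = 0 → 1 < x → x < 3 / 2 → x = β) := by
  intro β
  have hc0 : c ≠ 0 := by
    intro h; rw [h] at hc; norm_num at hc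
  have hxabs : |c⁻¹| < 4/27 := by
    rw [abs_inv, show (4:ℝ)/27 = (27/4)⁻¹ by norm_num]
    exact inv_strictAnti₀ (by norm_num) hc
  have hβ : β = ∑' n, Rn 1 n * (c⁻¹)^n := by
    apply tsum_congr
    intro n
    rw [Rn_one]
  have hroot : β^3 - c*β + c = 0 := by
    have := funeq (c⁻¹) hxabs
    rw [← hβ] at this
    have h2 : c * β = c * (1 + c⁻¹ * β^3) := by rw [← this]
    rw [mul_add, ← mul_assoc, mul_inv_cancel₀ hc0] at h2
    linarith
  constructor
  · intro hneg
    refine ⟨hroot, fun x hx => ?_⟩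
    by_contra hne
    have hfac : (x - β) * (x^2 + x*β + β^2 - c) = 0 := by
      linear_combination hx - hroot
    rcases mul_eq_zero.mp hfac with h | h
    · exact hne (by linarith [sub_eq_zero.mp h])
    · nlinarith [sq_nonneg (x + β), sq_nonneg (x - β), sq_nonneg x, sq_nonneg β]
  · intro hpos
    have hx0 : 0 < c⁻¹ := inv_pos.mpr (by linarith)
    have hs : Summable (fun n => Rn 1 n * (c⁻¹)^n) :=
      (summ_aux (c⁻¹) hxabs 1 zero_le_one _ (Rn_nonneg 1) (fun n => by simpa using Rn_one_le n)).of_norm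
    have hβ1 : 1 ≤ β := by
      rw [hβ]
      have h0 : Rn 1 0 * (c⁻¹)^0 = 1 := by rw [Rn_p_zero 0]; simp
      calc (1:ℝ) = Rn 1 0 * (c⁻¹)^0 := h0.symm
        _ ≤ ∑' n, Rn 1 n * (c⁻¹)^n := Summable.le_tsum hs 0 (fun j _ => mul_nonneg (Rn_nonneg 1 j) (by positivity))
    have hβgt : 1 < β := by
      have heq := funeq (c⁻¹) hxabs
      rw [← hβ] at heq
      have h3 : 0 < β^3 := pow_pos (by linarith) 3
      have h4 := mul_pos hx0 h3
      linarith [heq]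
    have hβlt : β < 3/2 := by rw [hβ]; exact beta_lt c hpos
    refine ⟨hβgt, hβlt, hroot, fun x hx hx1 hx2 => ?_⟩
    by_contra hne
    have hfac : (x - β) * (x^2 + x*β + β^2 - c) = 0 := by
      linear_combination hx - hroot
    rcases mul_eq_zero.mp hfac with h | h
    · exact hne (by linarith [sub_eq_zero.mp h])
    · nlinarith [h]
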